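/- Let δ < κ be a limit ordinal and let ⟨A_α : α < δ⟩ be an ⊆-increasing sequence of subsets of a linear order M_κ which is the union of a strictly ≺-increasing continuous chain ⟨M_i : i ≤ κ⟩. Suppose each A_α is nice, i.e. for every a ∈ M_κ \ A_α there is an index i(a, A_α) < κ such that the E_{A_α}-class of a is disjoint from M_{i(a,A_α)} but meets M_{i(a,A_α)+1}, and such that {b ∈ A_α : b < a} ∩ M_{i(a,A_α)} is cofinal in {b ∈ A_α : b < a} and {b ∈ A_α : a < b} ∩ M_{i(a,A_α)} is coinitial in {b ∈ A_α : a < b}. Assume further that α < β < δ and a ∈ M_κ \ A_β imply i(a, A_α) < i(a, A_β). Then A_δ := ⋃_{α<δ} A_α satisfies: for every a ∈ M_κ \ A_δ, the ordinal i(*) := sup_{α<δ} i(a, A_α) is < κ, is a limit ordinal, and the E_{A_δ}-class of a is disjoint from M_{i(*)}. -/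

import Mathlib

universe u

open Cardinal

/-- The `E_A`-class of `a`: all `b ∉ A` inducing the same cut on `A` as `a`. -/
def eCls {L : Type u} [LinearOrder L] (A : Set L) (a : L) : Set L :=
  {b | b ∉ A ∧ ∀ c ∈ A, (b < c ↔ a < c)}

/-- the union of an increasing chain of nice sets of length a limit
ordinal `δ < κ` (with `δ.card < cf κ`) is nice: for `a` outside the union, the supremum
`i(*)` of the indices `i(a, A_α)` is a limit ordinal `< κ`, and the `E_{A_δ}`-class of
`a` is disjoint from `M_{i(*)}`. -/
theorem stmt_7 (L : Type u) [LinearOrder L] (kap delta : Ordinal.{u})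
    (hdelta : delta < kap) (hlim : Order.IsSuccLimit delta) (hcof : delta.card < kap.cof)
    (Mc : Ordinal.{u} → Set L)
    (hMmono : ∀ i j, i ≤ j → Mc i ⊆ Mc j)
    (hMcont : ∀ i : Ordinal.{u}, Order.IsSuccLimit i → Mc i = ⋃ j, ⋃ (_ : j < i), Mc j)
    (A : Ordinal.{u} → Set L)
    (hAmono : ∀ α β, α ≤ β → β < delta → A α ⊆ A β)
    (idx : L → Ordinal.{u} → Ordinal.{u})
    (hnice : ∀ α < delta, ∀ a ∉ A α,
      idx a α < kap ∧
        eCls (A α) a ∩ Mc (idx a α) = ∅ ∧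
        (eCls (A α) a ∩ Mc (idx a α + 1)).Nonempty ∧
        (∀ b ∈ A α, b < a → ∃ b' ∈ A α ∩ Mc (idx a α), b ≤ b' ∧ b' < a) ∧
        (∀ b ∈ A α, a < b → ∃ b' ∈ A α ∩ Mc (idx a α), b' ≤ b ∧ a < b'))
    (hincr : ∀ α β, α < β → β < delta → ∀ a ∉ A β, idx a α < idx a β) :
    ∀ a ∉ ⋃ α, ⋃ (_ : α < delta), A α,
      sSup ((fun α => idx a α) '' Set.Iio delta) < kap ∧
        Order.IsSuccLimit (sSup ((fun α => idx a α) '' Set.Iio delta)) ∧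
        eCls (⋃ α, ⋃ (_ : α < delta), A α) a ∩
            Mc (sSup ((fun α => idx a α) '' Set.Iio delta)) = ∅ := by
  intro a ha
  -- `a` is outside every `A α`
  have haA : ∀ α < delta, a ∉ A α := by
    intro α hα h
    exact ha (Set.mem_iUnion.2 ⟨α, Set.mem_iUnion.2 ⟨hα, h⟩⟩)
  set S : Set Ordinal.{u} := (fun α => idx a α) '' Set.Iio delta with hS
  have hSlt : ∀ x ∈ S, x < kap := by
    rintro x ⟨α, hα, rfl⟩
    exact (hnice α hα a (haA α hα)).1
  have hbdd : BddAbove S := ⟨kap, fun x hx => (hSlt x hx).le⟩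
  have hne : S.Nonempty := ⟨idx a 0, ⟨0, hlim.pos, rfl⟩⟩
  -- sup < kap
  have h1 : sSup S < kap := by
    have hrange : S = Set.range (fun x : delta.ToType =>
        idx a ((Ordinal.ToType.mk (o := delta)).symm x)) := by
      rw [hS, Set.image_eq_range]
      exact ((Ordinal.ToType.mk (o := delta)).symm.surjective.range_comp
        (fun x : Set.Iio delta => idx a x)).symm
    rw [hrange]
    refine Ordinal.iSup_lt_ord ?_ ?_
    · rwa [Cardinal.mk_toType]
    · intro x
      have hx := ((Ordinal.ToType.mk (o := delta)).symm x).2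
      exact (hnice _ hx a (haA _ hx)).1
  -- key: anything below the sup is below some `idx a α`
  have hbelow : ∀ j < sSup S, ∃ α < delta, j < idx a α := by
    intro j hj
    by_contra h
    push_neg at h
    have : sSup S ≤ j := csSup_le hne (by rintro x ⟨α, hα, rfl⟩; exact h α hα)
    exact absurd hj this.not_gt
  -- the sup is a limit ordinal
  have hsucc : ∀ j < sSup S, Order.succ j < sSup S := by
    intro j hj
    obtain ⟨α, hα, hjα⟩ := hbelow j hj
    have hα1 : α + 1 < delta := hlim.succ_lt hα
    have h2 : idx a α < idx a (α + 1) :=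
      hincr α (α + 1) (Order.lt_succ α) hα1 a (haA _ hα1)
    have h3 : idx a (α + 1) ≤ sSup S := le_csSup hbdd ⟨α + 1, hα1, rfl⟩
    calc Order.succ j ≤ idx a α := Order.succ_le_of_lt hjα
      _ < idx a (α + 1) := h2
      _ ≤ sSup S := h3
  have hlim' : Order.IsSuccLimit (sSup S) := by
    rw [Ordinal.isSuccLimit_iff, Order.isSuccPrelimit_iff_succ_lt]
    refine ⟨?_, hsucc⟩
    have h0 : idx a 0 < idx a 1 := hincr 0 1 zero_lt_one (Ordinal.one_lt_of_isSuccLimit hlim) a (haA 1 (Ordinal.one_lt_of_isSuccLimit hlim))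
    have h1' : idx a 1 ≤ sSup S := le_csSup hbdd ⟨1, (Ordinal.one_lt_of_isSuccLimit hlim), rfl⟩
    exact ((zero_le (a := idx a 0)).trans_lt (h0.trans_le h1')).ne'
  refine ⟨h1, hlim', ?_⟩
  -- disjointness
  rw [Set.eq_empty_iff_forall_notMem]
  rintro b ⟨⟨hbA, hbcut⟩, hbM⟩
  rw [hMcont _ hlim'] at hbM
  obtain ⟨j, hjS, hbj⟩ := Set.mem_iUnion₂.1 hbM
  obtain ⟨α, hα, hjα⟩ := hbelow j hjS
  have hb' : b ∈ eCls (A α) a := by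
    refine ⟨fun h => hbA (Set.mem_iUnion.2 ⟨α, Set.mem_iUnion.2 ⟨hα, h⟩⟩), ?_⟩
    intro c hc
    exact hbcut c (Set.mem_iUnion.2 ⟨α, Set.mem_iUnion.2 ⟨hα, hc⟩⟩)
  have hbM' : b ∈ Mc (idx a α) := hMmono j _ hjα.le hbj
  have := (hnice α hα a (haA α hα)).2.1
  rw [Set.eq_empty_iff_forall_notMem] at this
  exact this b ⟨hb', hbM'⟩
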